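/- For every bounded function f : ℕ^Λ → ℝ, the series ∑_{η∈ℕ^Λ} ν_φ^Λ(η)·(Lf)(η) converges absolutely and equals 0; i.e. the spatially homogeneous product measures ν_φ^Λ are stationary for the process. -/

import Mathlib

open Filter Topology

/-- Stationary weights: `w 0 = 1`, `w n = ∏_{k=1}^n v(k−1)/u(k)`. -/
noncomputable def mpWeight (u v : ℕ → ℝ) (n : ℕ) : ℝ :=
  ∏ k ∈ Finset.Icc 1 n, v (k - 1) / u k

/-- The configuration `η^{xy}` obtained from `η` by moving one particle from `x` to `y`. -/
def moveConf {Λ : Type*} [DecidableEq Λ] (η : Λ → ℕ) (x y : Λ) : Λ → ℕ :=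
  fun z => η z - (if z = x then 1 else 0) + (if z = y then 1 else 0)

/-- The generator `(Lf)(η) = ∑_{x,y} p(x,y)·u(η_x)·v(η_y)·(f(η^{xy}) − f(η))`. -/
noncomputable def genApplyHom {Λ : Type*} [Fintype Λ] [DecidableEq Λ]
    (p : Λ → Λ → ℝ) (u v : ℕ → ℝ) (f : (Λ → ℕ) → ℝ) (η : Λ → ℕ) : ℝ :=
  ∑ x, ∑ y, p x y * u (η x) * v (η y) * (f (moveConf η x y) - f η)

set_option maxHeartbeats 1000000 in
private lemma summable_pi_prod_fin (n : ℕ) (g : Fin n → ℕ → ℝ)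
    (hs : ∀ i, Summable (g i)) (h0 : ∀ i m, 0 ≤ g i m) :
    Summable (fun η : Fin n → ℕ => ∏ i, g i (η i)) := by
  induction n with
  | zero => exact Summable.of_finite
  | succ n IH =>
      have ih := IH (fun i => g i.succ) (fun i => hs _) (fun i m => h0 _ _)
      have h2 : Summable (fun q : ℕ × (Fin n → ℕ) => g 0 q.1 * ∏ i, g i.succ (q.2 i)) := by
        apply Summable.mul_of_nonneg (hs 0) ih (fun m => h0 0 m)
        exact fun η => Finset.prod_nonneg fun i _ => h0 _ _
      have h3 := ((Fin.consEquiv (fun _ => ℕ)).symm.summable_iff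
        (f := fun q : ℕ × (Fin n → ℕ) => g 0 q.1 * ∏ i, g i.succ (q.2 i))).mpr h2
      refine h3.congr fun η => ?_
      rw [Fin.prod_univ_succ]
      rfl

set_option maxHeartbeats 1000000 in
private lemma summable_pi_prod {ι : Type*} [Fintype ι] (g : ι → ℕ → ℝ)
    (hs : ∀ i, Summable (g i)) (h0 : ∀ i m, 0 ≤ g i m) :
    Summable (fun η : ι → ℕ => ∏ i, g i (η i)) := by
  set e := Fintype.equivFin ι with he
  have h := summable_pi_prod_fin _ (fun j => g (e.symm j)) (fun j => hs _) (fun j m => h0 _ _)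
  have h3 := ((Equiv.arrowCongr e (Equiv.refl ℕ)).summable_iff
    (f := fun ξ : Fin (Fintype.card ι) → ℕ => ∏ j, g (e.symm j) (ξ j))).mpr h
  refine h3.congr fun η => ?_
  show ∏ j, g (e.symm j) ((Equiv.arrowCongr e (Equiv.refl ℕ) η) j) = _
  have hj : ∀ j, (Equiv.arrowCongr e (Equiv.refl ℕ) η) j = η (e.symm j) := fun j => rfl
  simp only [hj]
  exact Equiv.prod_comp e.symm (fun i => g i (η i))

private lemma mcinv {Λ : Type*} [DecidableEq Λ] (a b : Λ) (hab : a ≠ b)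
    (η : Λ → ℕ) (ha : 1 ≤ η a) : moveConf (moveConf η a b) b a = η := by
  funext z
  show ((η z - (if z = a then 1 else 0) + (if z = b then 1 else 0))
      - (if z = b then 1 else 0) + (if z = a then 1 else 0)) = η z
  by_cases h1 : z = a
  · subst h1
    rw [if_pos rfl, if_neg (fun h : z = b => hab h)]
    omega
  · rw [if_neg h1]
    omega

set_option maxHeartbeats 2000000 in
/-- If in- and out-rates agree at every site and `u(n)v(m) − u(m)v(n) = u(n) − u(m)`,
then for every bounded `f` the series `∑_η ν_φ^Λ(η)·(Lf)(η)` converges absolutely and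
equals `0`: the homogeneous product measures are stationary. -/
theorem homogeneous_product_measure_stationary
    {Λ : Type*} [Fintype Λ] [DecidableEq Λ] [Nonempty Λ]
    (p : Λ → Λ → ℝ) (hp : ∀ x y, 0 ≤ p x y) (hpdiag : ∀ x, p x x = 0)
    (hbal : ∀ x : Λ, ∑ y, p x y = ∑ y, p y x)
    (u : ℕ → ℝ) (hupos : ∀ n, 0 ≤ u n) (huzero : ∀ n, u n = 0 ↔ n = 0)
    (v : ℕ → ℝ) (hvpos : ∀ n, 0 < v n) (hv0 : v 0 = 1)
    (hcompat : ∀ n m : ℕ, u n * v m - u m * v n = u n - u m)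
    (φ : ℝ) (hφ : 0 < φ)
    (hz : Summable (fun n => mpWeight u v n * φ ^ n))
    (hzv : Summable (fun n => v n * mpWeight u v n * φ ^ n))
    (ν : (Λ → ℕ) → ℝ)
    (hν : ∀ η, ν η = ∏ x, mpWeight u v (η x) * φ ^ (η x) /
        (∑' n, mpWeight u v n * φ ^ n))
    (f : (Λ → ℕ) → ℝ) (hf : ∃ M, ∀ η, |f η| ≤ M) :
    Summable (fun η : Λ → ℕ => |ν η * genApplyHom p u v f η|) ∧
    (∑' η : Λ → ℕ, ν η * genApplyHom p u v f η) = 0 := by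
  obtain ⟨M, hM⟩ := hf
  have hM0 : 0 ≤ M := le_trans (abs_nonneg _) (hM (fun _ => 0))
  set W : ℕ → ℝ := mpWeight u v with hWdef
  set Z : ℝ := ∑' n, W n * φ ^ n with hZdef
  -- basic positivity facts
  have hu1 : ∀ n : ℕ, n ≠ 0 → 0 < u n := fun n hn =>
    lt_of_le_of_ne (hupos n) (fun h => hn ((huzero n).mp h.symm))
  have hwpos : ∀ n, 0 < W n := by
    intro n
    rw [hWdef]
    unfold mpWeight
    apply Finset.prod_pos
    intro k hk
    have hk1 : 1 ≤ k := (Finset.mem_Icc.mp hk).1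
    exact div_pos (hvpos _) (hu1 k (by omega))
  have huw : ∀ n, u (n + 1) * W (n + 1) = v n * W n := by
    intro n
    have hsucc : W (n + 1) = W n * (v n / u (n + 1)) := by
      rw [hWdef]
      unfold mpWeight
      rw [Finset.prod_Icc_succ_top (by omega : 1 ≤ n + 1)]
      simp
    rw [hsucc]
    field_simp
    rw [mul_assoc, mul_div_cancel_left₀ _ (hu1 (n + 1) (by omega)).ne', mul_comm]
  have hZpos : 0 < Z := by
    rw [hZdef]
    refine Summable.tsum_pos hz (fun n => mul_nonneg (hwpos n).le (pow_nonneg hφ.le n)) 0 ?_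
    have hW0 : W 0 = 1 := by rw [hWdef]; unfold mpWeight; simp
    simp [hW0]
  have hZne : Z ≠ 0 := hZpos.ne'
  have hνpos : ∀ η, 0 < ν η := by
    intro η
    rw [hν η]
    exact Finset.prod_pos fun z _ =>
      div_pos (mul_pos (hwpos _) (pow_pos hφ _)) hZpos
  -- marginal summabilities
  have hbases : Summable (fun n => W n * φ ^ n / Z) := hz.div_const Z
  have hvs : Summable (fun n => v n * (W n * φ ^ n / Z)) := by
    refine (hzv.div_const Z).congr fun n => ?_
    ring
  have hus : Summable (fun n => u n * (W n * φ ^ n / Z)) := by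
    have h1 : Summable (fun n => u (n + 1) * (W (n + 1) * φ ^ (n + 1) / Z)) := by
      refine ((hzv.div_const Z).mul_right φ).congr fun n => ?_
      rw [show u (n + 1) * (W (n + 1) * φ ^ (n + 1) / Z)
          = (u (n + 1) * W (n + 1)) * φ ^ (n + 1) / Z by ring, huw n, pow_succ]
      ring
    exact (summable_nat_add_iff 1).mp h1
  -- envelope summability
  have envelope : ∀ (F G : ℕ → ℝ), (∀ n, 0 ≤ F n) → (∀ n, 0 ≤ G n) →
      Summable (fun n => F n * (W n * φ ^ n / Z)) →
      Summable (fun n => G n * (W n * φ ^ n / Z)) →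
      ∀ x y : Λ, x ≠ y →
      Summable (fun η : Λ → ℕ => F (η x) * G (η y) * ν η) := by
    intro F G hF hG hFs hGs x y hxy
    have hsp := summable_pi_prod
      (fun z n => (if z = x then F n else 1) * ((if z = y then G n else 1) * (W n * φ ^ n / Z)))
      ?_ ?_
    · refine hsp.congr fun η => ?_
      show (∏ z, (if z = x then F (η z) else 1) *
          ((if z = y then G (η z) else 1) * (W (η z) * φ ^ (η z) / Z))) = _
      rw [Finset.prod_mul_distrib, Finset.prod_mul_distrib,
        Fintype.prod_ite_eq' x (fun z => F (η z)), Fintype.prod_ite_eq' y (fun z => G (η z)),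
        ← hν η]
      ring
    · intro z
      by_cases h1 : z = x
      · subst h1
        refine hFs.congr fun n => ?_
        simp [hxy]
      · by_cases h2 : z = y
        · subst h2
          refine hGs.congr fun n => ?_
          simp [h1]
        · refine hbases.congr fun n => ?_
          simp [h1, h2]
    · intro z n
      have hb : 0 ≤ W n * φ ^ n / Z := div_nonneg (mul_nonneg (hwpos n).le (pow_nonneg hφ.le n)) hZpos.le
      refine mul_nonneg ?_ (mul_nonneg ?_ hb) <;> split_ifs <;>
        first | exact hF n | exact hG n | norm_num
  have E1 : ∀ x y : Λ, x ≠ y → Summable (fun η : Λ → ℕ => u (η x) * v (η y) * ν η) :=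
    fun x y hxy => envelope u v hupos (fun n => (hvpos n).le) hus hvs x y hxy
  -- generic absolute summability
  have habs2 : ∀ (c : ℝ), 0 ≤ c → ∀ (a b : Λ), a ≠ b → ∀ (g : (Λ → ℕ) → ℝ) (K : ℝ), 0 ≤ K →
      (∀ η, |g η| ≤ K) →
      Summable (fun η : Λ → ℕ => |ν η * (c * u (η a) * v (η b) * g η)|) := by
    intro c hc a b hab g K hK0 hK
    refine Summable.of_nonneg_of_le (fun η => abs_nonneg _) (fun η => ?_)
      ((E1 a b hab).mul_left (c * K))
    have hP : 0 ≤ c * u (η a) * v (η b) :=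
      mul_nonneg (mul_nonneg hc (hupos _)) (hvpos _).le
    have h1 : |ν η * (c * u (η a) * v (η b) * g η)|
        = ν η * (c * u (η a) * v (η b)) * |g η| := by
      rw [abs_mul, abs_mul, abs_of_nonneg (hνpos η).le, abs_of_nonneg hP]
      ring
    rw [h1]
    calc ν η * (c * u (η a) * v (η b)) * |g η|
        ≤ ν η * (c * u (η a) * v (η b)) * K :=
          mul_le_mul_of_nonneg_left (hK η) (mul_nonneg (hνpos η).le hP)
      _ = c * K * (u (η a) * v (η b) * ν η) := by ring
  -- detailed balance
  have hbalance : ∀ x y : Λ, x ≠ y → ∀ η : Λ → ℕ, 1 ≤ η x →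
      ν η * u (η x) * v (η y) =
        ν (moveConf η x y) * u (moveConf η x y y) * v (moveConf η x y x) := by
    intro x y hxy η hx
    have hmx : moveConf η x y x = η x - 1 := by
      show η x - (if x = x then 1 else 0) + (if x = y then 1 else 0) = η x - 1
      rw [if_pos rfl, if_neg hxy]
      omega
    have hmy : moveConf η x y y = η y + 1 := by
      show η y - (if y = x then 1 else 0) + (if y = y then 1 else 0) = η y + 1
      rw [if_pos rfl, if_neg (fun h : y = x => hxy h.symm)]
      omega
    have hother : ∀ z, z ≠ x → z ≠ y → moveConf η x y z = η z := by
      intro z h1 h2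
      show η z - (if z = x then 1 else 0) + (if z = y then 1 else 0) = η z
      rw [if_neg h1, if_neg h2]
      omega
    have hyx : y ∈ Finset.univ.erase x :=
      Finset.mem_erase.mpr ⟨fun h => hxy h.symm, Finset.mem_univ y⟩
    have split : ∀ G : Λ → ℝ,
        ∏ z, G z = G x * (G y * ∏ z ∈ (Finset.univ.erase x).erase y, G z) := by
      intro G
      rw [Finset.mul_prod_erase _ G hyx, Finset.mul_prod_erase _ G (Finset.mem_univ x)]
    obtain ⟨n, hn⟩ : ∃ n, η x = n + 1 := ⟨η x - 1, by omega⟩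
    rw [hν η, hν (moveConf η x y)]
    simp only [split]
    rw [hmx, hmy, hn]
    have hrest : (∏ z ∈ (Finset.univ.erase x).erase y,
          (W ((moveConf η x y) z) * φ ^ ((moveConf η x y) z) / Z))
        = ∏ z ∈ (Finset.univ.erase x).erase y, (W (η z) * φ ^ (η z) / Z) := by
      refine Finset.prod_congr rfl fun z hz => ?_
      obtain ⟨hz1, hz2⟩ := Finset.mem_erase.mp hz
      obtain ⟨hz3, _⟩ := Finset.mem_erase.mp hz2
      rw [hother z hz3 hz1]
    rw [hrest]
    simp only [Nat.add_sub_cancel]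
    set R := ∏ z ∈ (Finset.univ.erase x).erase y, (W (η z) * φ ^ (η z) / Z) with hR
    set m := η y with hm
    linear_combination (φ ^ (n + 1) * φ ^ m * W m * v m * R / Z ^ 2) * huw n
      - (φ ^ n * φ ^ (m + 1) * W n * v n * R / Z ^ 2) * huw m
  -- per-pair identity
  have key0 : ∀ x y : Λ,
      Summable (fun η : Λ → ℕ =>
        |ν η * (p x y * u (η x) * v (η y) * (f (moveConf η x y) - f η))|) ∧
      (∑' η : Λ → ℕ, ν η * (p x y * u (η x) * v (η y) * (f (moveConf η x y) - f η)))
        = ∑' η : Λ → ℕ, ν η * f η * (p x y * (u (η y) - u (η x))) := by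
    intro x y
    by_cases hxy : x = y
    · subst hxy
      constructor
      · refine summable_zero.congr fun η => ?_
        simp [hpdiag x]
      · calc (∑' η : Λ → ℕ, ν η * (p x x * u (η x) * v (η x) * (f (moveConf η x x) - f η)))
            = ∑' _ : Λ → ℕ, (0 : ℝ) := tsum_congr fun η => by simp [hpdiag x]
          _ = ∑' η : Λ → ℕ, ν η * f η * (p x x * (u (η x) - u (η x))) :=
              (tsum_congr fun η => by simp [hpdiag x]).symm
    · have hA := habs2 (p x y) (hp x y) x y hxy (fun η => f (moveConf η x y)) M hM0 (fun η => hM _)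
      have hB := habs2 (p x y) (hp x y) x y hxy f M hM0 hM
      have hC := habs2 (p x y) (hp x y) y x (Ne.symm hxy) f M hM0 hM
      have hT : Summable (fun η : Λ → ℕ =>
          |ν η * (p x y * u (η x) * v (η y) * (f (moveConf η x y) - f η))|) :=
        habs2 (p x y) (hp x y) x y hxy (fun η => f (moveConf η x y) - f η) (M + M)
          (by linarith) (fun η => (abs_sub _ _).trans (add_le_add (hM _) (hM _)))
      refine ⟨hT, ?_⟩
      have hAs : Summable (fun η : Λ → ℕ => ν η * (p x y * u (η x) * v (η y) * f (moveConf η x y))) :=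
        hA.of_abs
      have hBs : Summable (fun η : Λ → ℕ => ν η * (p x y * u (η x) * v (η y) * f η)) := hB.of_abs
      have hCs : Summable (fun η : Λ → ℕ => ν η * (p x y * u (η y) * v (η x) * f η)) := hC.of_abs
      have hsupp : ∀ ζ : Λ → ℕ, (ν ζ * (p x y * u (ζ y) * v (ζ x) * f ζ)) ≠ 0 → 1 ≤ ζ y := by
        intro ζ h
        by_contra hlt
        have h0 : ζ y = 0 := by omega
        rw [h0, (huzero 0).mpr rfl] at h
        simp at h
      have hcov : (∑' η : Λ → ℕ, ν η * (p x y * u (η x) * v (η y) * f (moveConf η x y)))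
          = ∑' ζ : Λ → ℕ, ν ζ * (p x y * u (ζ y) * v (ζ x) * f ζ) := by
        apply tsum_eq_tsum_of_ne_zero_bij (i := fun ζ => moveConf ζ.1 y x)
        · rintro ⟨ζ1, h1⟩ ⟨ζ2, h2⟩ heq
          have hy1 : 1 ≤ ζ1 y := hsupp ζ1 h1
          have hy2 : 1 ≤ ζ2 y := hsupp ζ2 h2
          have e1 := mcinv y x (fun h => hxy h.symm) ζ1 hy1
          have e2 := mcinv y x (fun h => hxy h.symm) ζ2 hy2
          apply Subtype.ext
          have heq' : moveConf ζ1 y x = moveConf ζ2 y x := heq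
          have := congrArg (fun w => moveConf w x y) heq'
          simpa [e1, e2] using this
        · intro η hη
          have hx1 : 1 ≤ η x := by
            by_contra hlt
            have h0 : η x = 0 := by omega
            apply hη
            show ν η * (p x y * u (η x) * v (η y) * f (moveConf η x y)) = 0
            rw [h0, (huzero 0).mpr rfl]
            ring
          have hfne : f (moveConf η x y) ≠ 0 := by
            intro h0
            apply hη
            show ν η * (p x y * u (η x) * v (η y) * f (moveConf η x y)) = 0
            rw [h0]
            ring
          have hpne : p x y ≠ 0 := by
            intro h0
            apply hη
            show ν η * (p x y * u (η x) * v (η y) * f (moveConf η x y)) = 0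
            rw [h0]
            ring
          have hmem : (moveConf η x y) ∈ Function.support
              (fun ζ : Λ → ℕ => ν ζ * (p x y * u (ζ y) * v (ζ x) * f ζ)) := by
            have hmyv : (moveConf η x y) y = η y + 1 := by
              show η y - (if y = x then 1 else 0) + (if y = y then 1 else 0) = η y + 1
              rw [if_pos rfl, if_neg (fun h : y = x => hxy h.symm)]
              omega
            show ν (moveConf η x y) *
              (p x y * u ((moveConf η x y) y) * v ((moveConf η x y) x) * f (moveConf η x y)) ≠ 0
            apply mul_ne_zero (hνpos _).ne'
            apply mul_ne_zero (mul_ne_zero (mul_ne_zero hpne ?_) (hvpos _).ne') hfne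
            rw [hmyv]
            exact fun h => (by omega : η y + 1 ≠ 0) ((huzero _).mp h)
          refine ⟨⟨moveConf η x y, hmem⟩, ?_⟩
          show moveConf (moveConf η x y) y x = η
          exact mcinv x y hxy η hx1
        · rintro ⟨ζ, hζ⟩
          have hy : 1 ≤ ζ y := hsupp ζ hζ
          have hstep : moveConf (moveConf ζ y x) x y = ζ := mcinv y x (fun h => hxy h.symm) ζ hy
          have hηtx : 1 ≤ (moveConf ζ y x) x := by
            show 1 ≤ ζ x - (if x = y then 1 else 0) + (if x = x then 1 else 0)
            rw [if_neg hxy, if_pos rfl]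
            omega
          have hb := hbalance x y hxy (moveConf ζ y x) hηtx
          rw [hstep] at hb
          show ν (moveConf ζ y x) * (p x y * u ((moveConf ζ y x) x) * v ((moveConf ζ y x) y) *
              f (moveConf (moveConf ζ y x) x y)) = ν ζ * (p x y * u (ζ y) * v (ζ x) * f ζ)
          rw [hstep]
          linear_combination (p x y * f ζ) * hb
      have hsplit : (∑' η : Λ → ℕ, ν η * (p x y * u (η x) * v (η y) * (f (moveConf η x y) - f η)))
          = (∑' η : Λ → ℕ, ν η * (p x y * u (η x) * v (η y) * f (moveConf η x y)))
            - ∑' η : Λ → ℕ, ν η * (p x y * u (η x) * v (η y) * f η) := by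
        rw [← Summable.tsum_sub hAs hBs]
        exact tsum_congr fun η => by ring
      rw [hsplit, hcov, ← Summable.tsum_sub hCs hBs]
      exact tsum_congr fun η => by
        linear_combination (ν η * f η * p x y) * hcompat (η y) (η x)
  have hTsum : ∀ x y : Λ, Summable (fun η : Λ → ℕ =>
      |ν η * (p x y * u (η x) * v (η y) * (f (moveConf η x y) - f η))|) := fun x y => (key0 x y).1
  have hexp : ∀ η, ν η * genApplyHom p u v f η
      = ∑ x, ∑ y, ν η * (p x y * u (η x) * v (η y) * (f (moveConf η x y) - f η)) := by
    intro η
    simp only [genApplyHom, Finset.mul_sum]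
  constructor
  · have hbig : Summable (fun η : Λ → ℕ => ∑ x, ∑ y,
        |ν η * (p x y * u (η x) * v (η y) * (f (moveConf η x y) - f η))|) :=
      summable_sum fun x _ => summable_sum fun y _ => hTsum x y
    refine Summable.of_nonneg_of_le (fun η => abs_nonneg _) (fun η => ?_) hbig
    rw [hexp η]
    refine (Finset.abs_sum_le_sum_abs _ _).trans
      (Finset.sum_le_sum fun x _ => Finset.abs_sum_le_sum_abs _ _)
  · have hsum1 : ∀ x y : Λ, Summable (fun η : Λ → ℕ =>
        ν η * (p x y * u (η x) * v (η y) * (f (moveConf η x y) - f η))) :=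
      fun x y => (hTsum x y).of_abs
    have hDsum : ∀ x y : Λ, Summable (fun η : Λ → ℕ =>
        ν η * f η * (p x y * (u (η y) - u (η x)))) := by
      intro x y
      by_cases hxy : x = y
      · subst hxy
        refine summable_zero.congr fun η => ?_
        simp [hpdiag x]
      · have hB := (habs2 (p x y) (hp x y) x y hxy f M hM0 hM).of_abs
        have hC := (habs2 (p x y) (hp x y) y x (Ne.symm hxy) f M hM0 hM).of_abs
        refine (hC.sub hB).congr fun η => ?_
        linear_combination (ν η * f η * p x y) * hcompat (η y) (η x)
    have hzero : ∀ η : Λ → ℕ, ∑ x, ∑ y, ν η * f η * (p x y * (u (η y) - u (η x))) = 0 := by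
      intro η
      have key : ∑ x : Λ, ∑ y : Λ, p x y * u (η y) = ∑ x : Λ, ∑ y : Λ, p x y * u (η x) := by
        calc ∑ x : Λ, ∑ y : Λ, p x y * u (η y)
            = ∑ y : Λ, ∑ x : Λ, p x y * u (η y) := Finset.sum_comm
          _ = ∑ y : Λ, (∑ x : Λ, p x y) * u (η y) :=
              Finset.sum_congr rfl fun y _ => (Finset.sum_mul _ _ _).symm
          _ = ∑ y : Λ, (∑ x : Λ, p y x) * u (η y) :=
              Finset.sum_congr rfl fun y _ => by rw [← hbal y]
          _ = ∑ x : Λ, ∑ y : Λ, p x y * u (η x) :=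
              Finset.sum_congr rfl fun y _ => Finset.sum_mul _ _ _
      have expand : ∑ x : Λ, ∑ y : Λ, ν η * f η * (p x y * (u (η y) - u (η x)))
          = ν η * f η *
            ((∑ x : Λ, ∑ y : Λ, p x y * u (η y)) - ∑ x : Λ, ∑ y : Λ, p x y * u (η x)) := by
        rw [mul_sub, Finset.mul_sum, Finset.mul_sum, ← Finset.sum_sub_distrib]
        refine Finset.sum_congr rfl fun x _ => ?_
        rw [Finset.mul_sum, Finset.mul_sum, ← Finset.sum_sub_distrib]
        refine Finset.sum_congr rfl fun y _ => ?_
        ring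
      rw [expand, key, sub_self, mul_zero]
    calc ∑' η : Λ → ℕ, ν η * genApplyHom p u v f η
        = ∑' η : Λ → ℕ, ∑ x, ∑ y,
            ν η * (p x y * u (η x) * v (η y) * (f (moveConf η x y) - f η)) := tsum_congr hexp
      _ = ∑ x, ∑' η : Λ → ℕ, ∑ y,
            ν η * (p x y * u (η x) * v (η y) * (f (moveConf η x y) - f η)) :=
          Summable.tsum_finsetSum fun x _ => summable_sum fun y _ => hsum1 x y
      _ = ∑ x, ∑ y, ∑' η : Λ → ℕ,
            ν η * (p x y * u (η x) * v (η y) * (f (moveConf η x y) - f η)) :=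
          Finset.sum_congr rfl fun x _ => Summable.tsum_finsetSum fun y _ => hsum1 x y
      _ = ∑ x, ∑ y, ∑' η : Λ → ℕ, ν η * f η * (p x y * (u (η y) - u (η x))) :=
          Finset.sum_congr rfl fun x _ => Finset.sum_congr rfl fun y _ => (key0 x y).2
      _ = ∑ x, ∑' η : Λ → ℕ, ∑ y, ν η * f η * (p x y * (u (η y) - u (η x))) :=
          Finset.sum_congr rfl fun x _ => (Summable.tsum_finsetSum fun y _ => hDsum x y).symm
      _ = ∑' η : Λ → ℕ, ∑ x, ∑ y, ν η * f η * (p x y * (u (η y) - u (η x))) :=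
          (Summable.tsum_finsetSum fun x _ => summable_sum fun y _ => hDsum x y).symm
      _ = ∑' _ : Λ → ℕ, (0 : ℝ) := tsum_congr hzero
      _ = 0 := tsum_zero
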